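/- For every real number x with 0 ≤ x ≤ 1, the inequalities 3x/(2 + √(1 − x²)) ≤ arcsin x ≤ πx/(2 + √(1 − x²)) hold. -/

import Mathlib

open Real Set

private lemma df (θ : ℝ) :
    HasDerivAt (fun t => t * (2 + Real.cos t) - 3 * Real.sin t)
      (2 - 2 * Real.cos θ - θ * Real.sin θ) θ := by
  have h1 := (hasDerivAt_id θ).mul ((hasDerivAt_const θ (2:ℝ)).add (Real.hasDerivAt_cos θ))
  have h2 := (Real.hasDerivAt_sin θ).const_mul (3:ℝ)
  exact (h1.sub h2).congr_deriv (by simp; ring)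

private lemma df' (θ : ℝ) :
    HasDerivAt (fun t => 2 - 2 * Real.cos t - t * Real.sin t)
      (Real.sin θ - θ * Real.cos θ) θ := by
  have h1 := ((Real.hasDerivAt_cos θ).const_mul (2:ℝ)).const_sub (2:ℝ)
  have h2 := (hasDerivAt_id θ).mul (Real.hasDerivAt_sin θ)
  exact (h1.sub h2).congr_deriv (by simp; ring)

private lemma dg (θ : ℝ) :
    HasDerivAt (fun t => π * Real.sin t - t * (2 + Real.cos t))
      (π * Real.cos θ - (2 + Real.cos θ) + θ * Real.sin θ) θ := by
  have h1 := (Real.hasDerivAt_sin θ).const_mul π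
  have h2 := (hasDerivAt_id θ).mul ((hasDerivAt_const θ (2:ℝ)).add (Real.hasDerivAt_cos θ))
  exact (h1.sub h2).congr_deriv (by simp; ring)

private lemma dg' (θ : ℝ) :
    HasDerivAt (fun t => π * Real.cos t - (2 + Real.cos t) + t * Real.sin t)
      ((2 - π) * Real.sin θ + θ * Real.cos θ) θ := by
  have h1 := (Real.hasDerivAt_cos θ).const_mul π
  have h2 := ((hasDerivAt_const θ (2:ℝ)).add (Real.hasDerivAt_cos θ))
  have h3 := (hasDerivAt_id θ).mul (Real.hasDerivAt_sin θ)
  exact ((h1.sub h2).add h3).congr_deriv (by simp; ring)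

/-- sin θ - θ cos θ ≥ 0 on the open interval. -/
private lemma key (θ : ℝ) (h1 : 0 < θ) (h2 : θ < π / 2) :
    0 ≤ Real.sin θ - θ * Real.cos θ := by
  have hc : 0 < Real.cos θ := Real.cos_pos_of_mem_Ioo ⟨by linarith [Real.pi_pos], h2⟩
  have ht := Real.lt_tan h1 h2
  rw [Real.tan_eq_sin_div_cos] at ht
  have : θ * Real.cos θ < Real.sin θ := by
    rwa [lt_div_iff₀ hc] at ht
  linarith

private lemma left_ineq (θ : ℝ) (hθ : θ ∈ Icc 0 (π / 2)) :
    3 * Real.sin θ ≤ θ * (2 + Real.cos θ) := by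
  set f : ℝ → ℝ := fun t => t * (2 + Real.cos t) - 3 * Real.sin t with hf
  set f' : ℝ → ℝ := fun t => 2 - 2 * Real.cos t - t * Real.sin t with hf'
  have hconv : Convex ℝ (Icc (0:ℝ) (π / 2)) := convex_Icc _ _
  -- f' is monotone on Icc
  have hmono' : MonotoneOn f' (Icc 0 (π / 2)) := by
    apply monotoneOn_of_deriv_nonneg hconv
    · exact Continuous.continuousOn (by continuity)
    · intro x _; exact (df' x).differentiableAt.differentiableWithinAt
    · intro x hx
      rw [interior_Icc] at hx
      rw [(df' x).deriv]
      exact key x hx.1 hx.2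
  -- so f' ≥ 0 on Icc
  have hf'nonneg : ∀ x ∈ Icc (0:ℝ) (π / 2), 0 ≤ f' x := by
    intro x hx
    have h0 : (0:ℝ) ∈ Icc (0:ℝ) (π / 2) := ⟨le_refl _, by positivity⟩
    have := hmono' h0 hx hx.1
    simpa [hf'] using this
  -- f is monotone on Icc
  have hmono : MonotoneOn f (Icc 0 (π / 2)) := by
    apply monotoneOn_of_deriv_nonneg hconv
    · exact Continuous.continuousOn (by continuity)
    · intro x _; exact (df x).differentiableAt.differentiableWithinAt
    · intro x hx
      rw [interior_Icc] at hx
      rw [(df x).deriv]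
      exact hf'nonneg x ⟨hx.1.le, hx.2.le⟩
  have h0 : (0:ℝ) ∈ Icc (0:ℝ) (π / 2) := ⟨le_refl _, by positivity⟩
  have := hmono h0 hθ hθ.1
  simp only [hf] at this
  simp at this
  linarith

private lemma right_ineq (θ : ℝ) (hθ : θ ∈ Icc 0 (π / 2)) :
    θ * (2 + Real.cos θ) ≤ π * Real.sin θ := by
  set g : ℝ → ℝ := fun t => π * Real.sin t - t * (2 + Real.cos t) with hgdef
  set g' : ℝ → ℝ := fun t => π * Real.cos t - (2 + Real.cos t) + t * Real.sin t with hg'def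
  have hderiv : deriv g = g' := funext fun t => (dg t).deriv
  have hconv : Convex ℝ (Icc (0:ℝ) (π / 2)) := convex_Icc _ _
  have hconc : ConcaveOn ℝ (Icc (0:ℝ) (π / 2)) g := by
    apply concaveOn_of_deriv2_nonpos hconv
    · exact Continuous.continuousOn (by continuity)
    · intro x _; exact (dg x).differentiableAt.differentiableWithinAt
    · rw [hderiv]; intro x _; exact (dg' x).differentiableAt.differentiableWithinAt
    · intro x hx
      rw [interior_Icc] at hx
      obtain ⟨hx1, hx2⟩ := hx
      have : deriv^[2] g x = deriv (deriv g) x := by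
        simp [Function.iterate_succ, Function.comp]
      rw [this, hderiv, (dg' x).deriv]
      -- (2 - π) * sin x + x * cos x ≤ 0
      have hs : 0 ≤ Real.sin x := Real.sin_nonneg_of_nonneg_of_le_pi hx1.le
        (by linarith [Real.pi_pos])
      have hkey := key x hx1 hx2
      have hpi : (3:ℝ) < π := by
        have := Real.pi_gt_d6; linarith
      nlinarith
  have hg0 : g 0 = 0 := by simp [hgdef]
  have hgpi2 : g (π / 2) = 0 := by
    show π * Real.sin (π / 2) - (π / 2) * (2 + Real.cos (π / 2)) = 0
    rw [Real.sin_pi_div_two, Real.cos_pi_div_two]; ring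
  have hpi : (0:ℝ) < π := Real.pi_pos
  -- express θ as convex combination
  set b : ℝ := 2 * θ / π with hb
  have hb0 : 0 ≤ b := div_nonneg (by linarith [hθ.1]) hpi.le
  have hb1 : b ≤ 1 := by
    rw [hb, div_le_one hpi]
    linarith [hθ.2]
  have h0mem : (0:ℝ) ∈ Icc (0:ℝ) (π / 2) := ⟨le_refl _, by positivity⟩
  have hpmem : (π / 2) ∈ Icc (0:ℝ) (π / 2) := ⟨by positivity, le_refl _⟩
  have hcc := hconc.2 h0mem hpmem (show (0:ℝ) ≤ 1 - b by linarith) hb0 (by ring)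
  have hcomb : (1 - b) • (0:ℝ) + b • (π / 2) = θ := by
    simp only [smul_eq_mul, hb, mul_zero, zero_add]
    field_simp
  rw [hcomb, hg0, hgpi2] at hcc
  simp only [smul_eq_mul, mul_zero, add_zero] at hcc
  have hfin : (0:ℝ) ≤ π * Real.sin θ - θ * (2 + Real.cos θ) := hcc
  linarith

theorem fink_bounds (x : ℝ) (hx : 0 ≤ x) (hx' : x ≤ 1) :
    3 * x / (2 + Real.sqrt (1 - x ^ 2)) ≤ Real.arcsin x ∧
    Real.arcsin x ≤ Real.pi * x / (2 + Real.sqrt (1 - x ^ 2)) := by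
  set θ := Real.arcsin x with hθdef
  have hsin : Real.sin θ = x := Real.sin_arcsin (by linarith) hx'
  have hcos : Real.cos θ = Real.sqrt (1 - x ^ 2) := Real.cos_arcsin x
  have hθmem : θ ∈ Icc 0 (π / 2) :=
    ⟨Real.arcsin_nonneg.mpr hx, Real.arcsin_le_pi_div_two x⟩
  have hd : 0 < 2 + Real.sqrt (1 - x ^ 2) := by positivity
  constructor
  · rw [div_le_iff₀ hd]
    have := left_ineq θ hθmem
    rw [hsin, hcos] at this
    linarith
  · rw [le_div_iff₀ hd]
    have := right_ineq θ hθmem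
    rw [hsin, hcos] at this
    linarith
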